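/- arXiv:0811.2312 — 2 statements merged into one kernel-verified Lean document; each statement's English description precedes it below -/
import Mathlib

section
/- Suppose Alice prepares a qubit in a basis state of one of three pairwise mutually unbiased bases of ℂ², choosing each of the two basis states of the chosen basis with equal prior probability 1/2, and Bob measures with an arbitrary POVM. Then the mutual information satisfies I_1 + I_2 + I_3 ≤ 1. -/
open scoped BigOperators ComplexOrder
open Matrix

noncomputable section

/-- Shannon entropy (in bits) of a finitely-indexed probability vector. -/
def shannonEntropy {ι : Type*} [Fintype ι] (q : ι → ℝ) : ℝ :=
  -∑ i, q i * Real.logb 2 (q i)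

/-- Born probability ⟨v|M|v⟩ of POVM element `M` on the (unit vector) state `v`. -/
def outProb {d : ℕ} (M : Matrix (Fin d) (Fin d) ℂ) (v : Fin d → ℂ) : ℝ :=
  (star v ⬝ᵥ M.mulVec v).re

/-- A finite family of matrices is a POVM if each member is positive semidefinite
and they sum to the identity. -/
def IsPOVM {d : ℕ} {S : Type*} [Fintype S] (E : S → Matrix (Fin d) (Fin d) ℂ) : Prop :=
  (∀ s, (E s).PosSemidef) ∧ ∑ s, E s = 1

/-- `B` lists the vectors of an orthonormal basis of ℂ^d. -/
def IsONB {d : ℕ} (B : Fin d → Fin d → ℂ) : Prop :=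
  ∀ i j, star (B i) ⬝ᵥ B j = if i = j then 1 else 0

/-- Two bases of ℂ^d are mutually unbiased: all squared overlaps equal 1/d. -/
def AreMUB {d : ℕ} (B C : Fin d → Fin d → ℂ) : Prop :=
  ∀ i j, ‖star (B i) ⬝ᵥ C j‖ ^ 2 = 1 / d

/-- Mutual information (in bits) between Alice's input `i` (prior `p i`, state `B i`)
and Bob's POVM outcome `s`:  `I = H({p i}) - ∑ s p(s) H({p_{i|s}})`. -/
def mutInfo {d : ℕ} {S : Type*} [Fintype S] (B : Fin d → Fin d → ℂ) (p : Fin d → ℝ)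
    (E : S → Matrix (Fin d) (Fin d) ℂ) : ℝ :=
  shannonEntropy p -
    ∑ s, (∑ i, p i * outProb (E s) (B i)) *
      shannonEntropy (fun i =>
        p i * outProb (E s) (B i) / ∑ j, p j * outProb (E s) (B j))



private def fA (x : ℝ) : ℝ :=
  2 * Real.log 2 * x ^ 2 - (1 + x) * Real.log (1 + x) - (1 - x) * Real.log (1 - x)

private def gA (x : ℝ) : ℝ := 4 * Real.log 2 * x - Real.log (1 + x) + Real.log (1 - x)

private def hA (x : ℝ) : ℝ := 4 * Real.log 2 - 1 / (1 + x) - 1 / (1 - x)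

private lemma hasDerivAt_fA {x : ℝ} (h1 : (0:ℝ) < 1 + x) (h2 : (0:ℝ) < 1 - x) :
    HasDerivAt fA (gA x) x := by
  have d1 : HasDerivAt (fun x : ℝ => (1 + x) * Real.log (1 + x))
      (Real.log (1 + x) + 1) x := by
    have hl : HasDerivAt (fun x : ℝ => Real.log (1 + x)) (1 / (1 + x)) x := by
      simpa [Function.comp_def] using (Real.hasDerivAt_log h1.ne').comp x
        (((hasDerivAt_id x).const_add 1))
    have := ((hasDerivAt_id x).const_add 1).mul hl
    refine this.congr_deriv ?_
    simp only [id_eq]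
    field_simp
  have d2 : HasDerivAt (fun x : ℝ => (1 - x) * Real.log (1 - x))
      (-Real.log (1 - x) - 1) x := by
    have hl : HasDerivAt (fun x : ℝ => Real.log (1 - x)) (-(1 / (1 - x))) x := by
      simpa [Function.comp_def] using (Real.hasDerivAt_log h2.ne').comp x
        (((hasDerivAt_id x).const_sub 1))
    have := (((hasDerivAt_id x).const_sub 1)).mul hl
    refine this.congr_deriv ?_
    simp only [id_eq]
    field_simp
    try ring
  have d0 : HasDerivAt (fun x : ℝ => 2 * Real.log 2 * x ^ 2) (4 * Real.log 2 * x) x := by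
    have := ((hasDerivAt_pow 2 x).const_mul (2 * Real.log 2))
    refine this.congr_deriv ?_
    ring
  have := (d0.sub d1).sub d2
  refine this.congr_deriv ?_
  simp only [gA]
  ring

private lemma hasDerivAt_gA {x : ℝ} (h1 : (0:ℝ) < 1 + x) (h2 : (0:ℝ) < 1 - x) :
    HasDerivAt gA (hA x) x := by
  have hl1 : HasDerivAt (fun x : ℝ => Real.log (1 + x)) (1 / (1 + x)) x := by
    simpa [Function.comp_def] using (Real.hasDerivAt_log h1.ne').comp x (((hasDerivAt_id x).const_add 1))
  have hl2 : HasDerivAt (fun x : ℝ => Real.log (1 - x)) (-(1 / (1 - x))) x := by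
    simpa [Function.comp_def] using (Real.hasDerivAt_log h2.ne').comp x (((hasDerivAt_id x).const_sub 1))
  have d0 : HasDerivAt (fun x : ℝ => 4 * Real.log 2 * x) (4 * Real.log 2) x := by
    simpa using (hasDerivAt_id x).const_mul (4 * Real.log 2)
  have := (d0.sub hl1).add hl2
  exact this.congr_deriv (by simp only [hA]; ring)

private lemma contFA : Continuous fA := by
  have h1 : Continuous fun x : ℝ => (1 + x) * Real.log (1 + x) :=
    Real.continuous_mul_log.comp (continuous_const.add continuous_id)
  have h2 : Continuous fun x : ℝ => (1 - x) * Real.log (1 - x) :=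
    Real.continuous_mul_log.comp (continuous_const.sub continuous_id)
  exact ((continuous_const.mul (continuous_pow 2)).sub h1).sub h2

private lemma two_log_two_gt_one : (1:ℝ) < 2 * Real.log 2 := by
  have := Real.log_two_gt_d9
  linarith

private lemma fA_nonneg {x : ℝ} (h0 : 0 ≤ x) (h1 : x ≤ 1) : 0 ≤ fA x := by
  have L0 : (0:ℝ) < Real.log 2 := Real.log_pos one_lt_two
  set x₀ : ℝ := Real.sqrt (1 - 1 / (2 * Real.log 2)) with hx₀def
  have hinv : (0:ℝ) < 1 / (2 * Real.log 2) := by positivity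
  have hinv1 : 1 / (2 * Real.log 2) < 1 := by
    rw [div_lt_one (by linarith [two_log_two_gt_one])]
    linarith [two_log_two_gt_one]
  have harg0 : (0:ℝ) < 1 - 1 / (2 * Real.log 2) := by linarith
  have hx₀pos : 0 < x₀ := Real.sqrt_pos.mpr harg0
  have hx₀lt : x₀ < 1 := by
    rw [hx₀def]
    rw [Real.sqrt_lt' one_pos]
    nlinarith
  have hx₀sq : x₀ ^ 2 = 1 - 1 / (2 * Real.log 2) := Real.sq_sqrt harg0.le
  have prod2 : (4 * Real.log 2) * (1 / (2 * Real.log 2)) = 2 := by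
    field_simp
    ring
  -- g is nonneg on [0, x₀]
  have hgmono : MonotoneOn gA (Set.Icc 0 x₀) := by
    apply monotoneOn_of_hasDerivWithinAt_nonneg (convex_Icc 0 x₀) ?cont ?deriv ?nonneg
    case cont =>
      intro y hy
      rcases hy with ⟨hy0, hy1⟩
      have hy2 : (0:ℝ) < 1 + y := by linarith
      have hy3 : (0:ℝ) < 1 - y := by linarith [hx₀lt]
      exact (hasDerivAt_gA hy2 hy3).continuousAt.continuousWithinAt
    case deriv =>
      intro y hy
      rw [interior_Icc] at hy
      rcases hy with ⟨hy0, hy1⟩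
      have hy2 : (0:ℝ) < 1 + y := by linarith
      have hy3 : (0:ℝ) < 1 - y := by linarith [hx₀lt]
      exact (hasDerivAt_gA hy2 hy3).hasDerivWithinAt
    case nonneg =>
      intro y hy
      rw [interior_Icc] at hy
      rcases hy with ⟨hy0, hy1⟩
      have hy3 : y < 1 := lt_trans hy1 hx₀lt
      have h1y : (0:ℝ) < 1 + y := by linarith
      have h2y : (0:ℝ) < 1 - y := by linarith
      have hysq : y ^ 2 < x₀ ^ 2 := by nlinarith
      rw [hx₀sq] at hysq
      have hle : 1 / (2 * Real.log 2) ≤ 1 - y^2 := by linarith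
      have hmul := mul_le_mul_of_nonneg_left hle
        (show (0:ℝ) ≤ 4 * Real.log 2 by linarith)
      rw [prod2] at hmul
      have hdeny : (0:ℝ) < 1 - y^2 := by nlinarith
      have key : 2 / (1 - y^2) ≤ 4 * Real.log 2 := by
        rw [div_le_iff₀ hdeny]
        linarith
      have expand : 1 / (1 + y) + 1 / (1 - y) = 2 / (1 - y^2) := by
        rw [div_add_div _ _ h1y.ne' h2y.ne']
        rw [show (1*(1-y)+(1+y)*1 : ℝ) = 2 by ring, show ((1+y)*(1-y) : ℝ) = 1 - y^2 by ring]
      simp only [hA]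
      linarith [expand, key]
  have hg0 : gA 0 = 0 := by simp [gA]
  have hgnn : ∀ y ∈ Set.Icc (0:ℝ) x₀, 0 ≤ gA y := by
    intro y hy
    have := hgmono (Set.left_mem_Icc.mpr hx₀pos.le) hy hy.1
    rwa [hg0] at this
  -- f is monotone on [0, x₀], so nonneg there
  have hfmono : MonotoneOn fA (Set.Icc 0 x₀) := by
    apply monotoneOn_of_hasDerivWithinAt_nonneg (convex_Icc 0 x₀)
      (contFA.continuousOn)
    · intro y hy
      rw [interior_Icc] at hy
      rcases hy with ⟨hy0, hy1⟩
      exact (hasDerivAt_fA (by linarith) (by linarith [hx₀lt])).hasDerivWithinAt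
    · intro y hy
      rw [interior_Icc] at hy
      exact hgnn y ⟨hy.1.le, hy.2.le⟩
  have hfA0 : fA 0 = 0 := by simp [fA]
  have hfnn₀ : ∀ y ∈ Set.Icc (0:ℝ) x₀, 0 ≤ fA y := by
    intro y hy
    have := hfmono (Set.left_mem_Icc.mpr hx₀pos.le) hy hy.1
    rwa [hfA0] at this
  -- f is concave on [x₀, 1]
  have hfconc : ConcaveOn ℝ (Set.Icc x₀ 1) fA := by
    apply concaveOn_of_hasDerivWithinAt2_nonpos (convex_Icc x₀ 1)
      (contFA.continuousOn) (f' := gA) (f'' := hA)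
    · intro y hy
      rw [interior_Icc] at hy
      rcases hy with ⟨hy0, hy1⟩
      exact (hasDerivAt_fA (by linarith [hx₀pos]) (by linarith)).hasDerivWithinAt
    · intro y hy
      rw [interior_Icc] at hy
      rcases hy with ⟨hy0, hy1⟩
      exact (hasDerivAt_gA (by linarith [hx₀pos]) (by linarith)).hasDerivWithinAt
    · intro y hy
      rw [interior_Icc] at hy
      rcases hy with ⟨hy0, hy1⟩
      have hy0' : 0 < y := lt_trans hx₀pos hy0
      have hysq : x₀ ^ 2 < y ^ 2 := by nlinarith
      rw [hx₀sq] at hysq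
      have h1y : (0:ℝ) < 1 + y := by linarith
      have h2y : (0:ℝ) < 1 - y := by linarith
      have hden : (0:ℝ) < 1 - y^2 := by nlinarith
      have hlt : 1 - y^2 < 1 / (2 * Real.log 2) := by linarith
      have hmul := mul_le_mul_of_nonneg_left hlt.le
        (show (0:ℝ) ≤ 4 * Real.log 2 by linarith)
      rw [prod2] at hmul
      have key : 4 * Real.log 2 ≤ 2 / (1 - y^2) := by
        rw [le_div_iff₀ hden]
        linarith
      have expand : 1 / (1 + y) + 1 / (1 - y) = 2 / (1 - y^2) := by
        rw [div_add_div _ _ h1y.ne' h2y.ne']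
        rw [show (1*(1-y)+(1+y)*1 : ℝ) = 2 by ring, show ((1+y)*(1-y) : ℝ) = 1 - y^2 by ring]
      simp only [hA]
      linarith [expand, key]
  have hfA1 : fA 1 = 0 := by
    simp only [fA]
    norm_num
  -- combine
  rcases le_or_gt x x₀ with hc | hc
  · exact hfnn₀ x ⟨h0, hc⟩
  · have hden : (0:ℝ) < 1 - x₀ := by linarith
    have ha0 : 0 ≤ (1 - x) / (1 - x₀) := by
      apply div_nonneg _ hden.le; linarith
    have hb0 : 0 ≤ (x - x₀) / (1 - x₀) := by
      apply div_nonneg _ hden.le; linarith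
    have hab : (1 - x) / (1 - x₀) + (x - x₀) / (1 - x₀) = 1 := by
      field_simp
      ring
    have hcomb : ((1 - x) / (1 - x₀)) • x₀ + ((x - x₀) / (1 - x₀)) • (1:ℝ) = x := by
      simp only [smul_eq_mul]
      field_simp
      ring
    have hcc := hfconc.2 (Set.mem_Icc.mpr ⟨le_refl x₀, hx₀lt.le⟩)
      (Set.mem_Icc.mpr ⟨hx₀lt.le, le_refl 1⟩) ha0 hb0 hab
    rw [hcomb, hfA1] at hcc
    have hfx₀ : 0 ≤ fA x₀ := hfnn₀ x₀ ⟨hx₀pos.le, le_refl _⟩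
    simp only [smul_eq_mul, mul_zero, add_zero] at hcc
    nlinarith

private lemma fA_even (x : ℝ) : fA (-x) = fA x := by
  simp only [fA]
  rw [show (1 + -x) = 1 - x by ring, show (1 - -x) = 1 + x by ring]
  ring

private lemma fA_nonneg' {x : ℝ} (h0 : -1 ≤ x) (h1 : x ≤ 1) : 0 ≤ fA x := by
  rcases le_or_gt 0 x with h | h
  · exact fA_nonneg h h1
  · rw [← fA_even]
    exact fA_nonneg (by linarith) (by linarith)

/-- Binary entropy lower bound: `H₂((1+x)/2) ≥ 1 - x²`. -/
lemma binEnt_ge {x : ℝ} (h0 : -1 ≤ x) (h1 : x ≤ 1) :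
    1 - x ^ 2 ≤
      -((1 + x) / 2 * Real.logb 2 ((1 + x) / 2) + (1 - x) / 2 * Real.logb 2 ((1 - x) / 2)) := by
  have L0 : (0:ℝ) < Real.log 2 := Real.log_pos one_lt_two
  rcases eq_or_lt_of_le h1 with rfl | h1'
  · norm_num
  rcases eq_or_lt_of_le h0 with h | h0'
  · rw [← h]; norm_num
  have hp1 : (0:ℝ) < 1 + x := by linarith
  have hp2 : (0:ℝ) < 1 - x := by linarith
  have key := fA_nonneg' h0 h1
  have e1 : Real.logb 2 ((1 + x) / 2) = (Real.log (1 + x) - Real.log 2) / Real.log 2 := by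
    rw [Real.logb, Real.log_div hp1.ne' two_ne_zero]
  have e2 : Real.logb 2 ((1 - x) / 2) = (Real.log (1 - x) - Real.log 2) / Real.log 2 := by
    rw [Real.logb, Real.log_div hp2.ne' two_ne_zero]
  have hdiff : -((1 + x) / 2 * Real.logb 2 ((1 + x) / 2)
        + (1 - x) / 2 * Real.logb 2 ((1 - x) / 2)) - (1 - x ^ 2)
      = fA x / (2 * Real.log 2) := by
    rw [e1, e2]
    simp only [fA]
    field_simp
    ring
  have hfr : 0 ≤ fA x / (2 * Real.log 2) := by positivity
  linarith





private def outerm (v : Fin 2 → ℂ) : Matrix (Fin 2) (Fin 2) ℂ :=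
  Matrix.vecMulVec v (star v)

private lemma trace_mul_outerm (M : Matrix (Fin 2) (Fin 2) ℂ) (v : Fin 2 → ℂ) :
    Matrix.trace (M * outerm v) = star v ⬝ᵥ M *ᵥ v := by
  simp [outerm, Matrix.trace_fin_two, Matrix.mul_apply, Matrix.vecMulVec_apply,
    dotProduct, Matrix.mulVec, Fin.sum_univ_two]
  ring

private lemma trace_outerm_mul_outerm (v w : Fin 2 → ℂ) :
    Matrix.trace (outerm v * outerm w) = (star v ⬝ᵥ w) * (star w ⬝ᵥ v) := by
  simp [outerm, Matrix.trace_fin_two, Matrix.mul_apply, Matrix.vecMulVec_apply,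
    dotProduct, Fin.sum_univ_two]
  ring

private lemma trace_outerm (v : Fin 2 → ℂ) :
    Matrix.trace (outerm v) = star v ⬝ᵥ v := by
  simp [outerm, Matrix.trace_fin_two, Matrix.vecMulVec_apply, dotProduct,
    Fin.sum_univ_two]
  ring

private lemma outerm_conjTranspose (v : Fin 2 → ℂ) : (outerm v)ᴴ = outerm v := by
  ext i j
  simp [outerm, Matrix.conjTranspose_apply, Matrix.vecMulVec_apply]
  ring

private lemma onb_complete {B : Fin 2 → Fin 2 → ℂ} (hB : IsONB B) :
    outerm (B 0) + outerm (B 1) = 1 := by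
  let V : Matrix (Fin 2) (Fin 2) ℂ := Matrix.of fun i j => B j i
  have h1 : Vᴴ * V = 1 := by
    ext i j
    have := hB i j
    simp [dotProduct, Fin.sum_univ_two] at this
    simp [Matrix.mul_apply, Matrix.conjTranspose_apply, V, Fin.sum_univ_two,
      Matrix.one_apply, this]
  have h2 : V * Vᴴ = 1 := mul_eq_one_comm.mp h1
  have h3 : ∀ i j, (V * Vᴴ) i j = (outerm (B 0) + outerm (B 1)) i j := by
    intro i j
    simp [Matrix.mul_apply, Matrix.conjTranspose_apply, V, Fin.sum_univ_two,
      outerm, Matrix.vecMulVec_apply]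
  ext i j
  rw [← h3, h2]

private lemma trace_sq_re_nonneg {N : Matrix (Fin 2) (Fin 2) ℂ} (h : N.IsHermitian) :
    0 ≤ (Matrix.trace (N * N)).re := by
  have e00 : ((N 0 0).re : ℂ) = N 0 0 := h.coe_re_apply_self 0
  have e11 : ((N 1 1).re : ℂ) = N 1 1 := h.coe_re_apply_self 1
  have e10 : N 1 0 = star (N 0 1) := (h.apply 1 0).symm
  rw [Matrix.trace_fin_two]
  simp only [Matrix.mul_apply, Fin.sum_univ_two]
  rw [e10, ← e00, ← e11]
  simp only [Complex.star_def]
  simp [Complex.mul_re, Complex.mul_im, Complex.add_re, Complex.add_im,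
    Complex.conj_re, Complex.conj_im, Complex.ofReal_re, Complex.ofReal_im]
  nlinarith [sq_nonneg ((N 0 0).re), sq_nonneg ((N 1 1).re), sq_nonneg ((N 0 1).re),
    sq_nonneg ((N 0 1).im)]

private lemma psd_key {M : Matrix (Fin 2) (Fin 2) ℂ} (hM : M.PosSemidef) (z w : ℂ) :
    0 ≤ (star z * (M 0 0 * z + M 0 1 * w) + star w * (M 1 0 * z + M 1 1 * w)).re := by
  have h0 := (Complex.le_def.mp (hM.dotProduct_mulVec_nonneg ![z, w])).1
  simpa [dotProduct, Matrix.mulVec, Fin.sum_univ_two] using h0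

private lemma psd_offdiag {M : Matrix (Fin 2) (Fin 2) ℂ} (hM : M.PosSemidef) :
    Complex.normSq (M 0 1) ≤ (M 0 0).re * (M 1 1).re := by
  have e00 : ((M 0 0).re : ℂ) = M 0 0 := hM.1.coe_re_apply_self 0
  have e11 : ((M 1 1).re : ℂ) = M 1 1 := hM.1.coe_re_apply_self 1
  have e10 : M 1 0 = star (M 0 1) := (hM.1.apply 1 0).symm
  set a : ℝ := (M 0 0).re with ha
  set d : ℝ := (M 1 1).re with hd
  set b : ℂ := M 0 1 with hb
  have ha0 : 0 ≤ a := by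
    have := psd_key hM 1 0
    simpa [← e00] using this
  have hd0 : 0 ≤ d := by
    have := psd_key hM 0 1
    simpa [← e11] using this
  rcases eq_or_lt_of_le ha0 with haz | hap
  · -- a = 0 : show b = 0
    by_contra hcon
    push_neg at hcon
    have hb2 : 0 < Complex.normSq b := by
      nlinarith [Complex.normSq_nonneg b]
    set T : ℝ := (d + 1) / (2 * Complex.normSq b) with hT
    have hkey := psd_key hM (-(T:ℂ) * b) 1
    rw [e10, ← e00, ← e11, ← haz] at hkey
    simp only [← hb] at hkey
    have heq : (star (-(T:ℂ) * b) * (((0:ℝ):ℂ) * (-(T:ℂ) * b) + b * 1)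
        + star (1:ℂ) * (star b * (-(T:ℂ) * b) + (d:ℂ) * 1)).re
        = -2 * T * Complex.normSq b + d := by
      simp only [Complex.star_def]
      simp [Complex.mul_re, Complex.mul_im, Complex.add_re, Complex.add_im,
        Complex.conj_re, Complex.conj_im, Complex.ofReal_re, Complex.ofReal_im,
        Complex.neg_re, Complex.neg_im, Complex.one_re, Complex.one_im,
        Complex.normSq_apply]
      ring
    rw [heq] at hkey
    have hTe : T * (2 * Complex.normSq b) = d + 1 := by
      rw [hT]; field_simp
    nlinarith
  · -- a > 0
    have hkey := psd_key hM b (-(a:ℂ))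
    rw [e10, ← e00, ← e11] at hkey
    simp only [← hb] at hkey
    have heq : (star b * (((a:ℝ):ℂ) * b + b * (-(a:ℂ))) +
        star (-(a:ℂ)) * (star b * b + ((d:ℝ):ℂ) * (-(a:ℂ)))).re
        = a * (a * d - Complex.normSq b) := by
      simp only [Complex.star_def]
      simp [Complex.mul_re, Complex.mul_im, Complex.add_re, Complex.add_im,
        Complex.conj_re, Complex.conj_im, Complex.ofReal_re, Complex.ofReal_im,
        Complex.neg_re, Complex.neg_im, Complex.normSq_apply]
      ring
    rw [heq] at hkey
    nlinarith

private lemma trace_mul_self_re_le {M : Matrix (Fin 2) (Fin 2) ℂ} (hM : M.PosSemidef) :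
    (Matrix.trace (M * M)).re ≤ ((Matrix.trace M).re)^2 := by
  have e00 : ((M 0 0).re : ℂ) = M 0 0 := hM.1.coe_re_apply_self 0
  have e11 : ((M 1 1).re : ℂ) = M 1 1 := hM.1.coe_re_apply_self 1
  have e10 : M 1 0 = star (M 0 1) := (hM.1.apply 1 0).symm
  have hoff := psd_offdiag hM
  have h1 : (Matrix.trace (M * M)).re
      = (M 0 0).re^2 + (M 1 1).re^2 + 2 * Complex.normSq (M 0 1) := by
    rw [Matrix.trace_fin_two]
    simp only [Matrix.mul_apply, Fin.sum_univ_two]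
    rw [e10, ← e00, ← e11]
    rw [show (M 0 1 * star (M 0 1)) = ((Complex.normSq (M 0 1) : ℝ) : ℂ) by
      rw [Complex.star_def, Complex.mul_conj]]
    rw [show (star (M 0 1) * M 0 1) = ((Complex.normSq (M 0 1) : ℝ) : ℂ) by
      rw [Complex.star_def, Complex.normSq_eq_conj_mul_self]]
    simp [Complex.add_re, Complex.mul_re, Complex.ofReal_re, Complex.ofReal_im]
    ring
  have h2 : (Matrix.trace M).re = (M 0 0).re + (M 1 1).re := by
    rw [Matrix.trace_fin_two]
    simp [Complex.add_re]
  rw [h1, h2]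
  nlinarith

private lemma onb_q_sum {M : Matrix (Fin 2) (Fin 2) ℂ} {B : Fin 2 → Fin 2 → ℂ}
    (hB : IsONB B) :
    (star (B 0) ⬝ᵥ M *ᵥ B 0) + (star (B 1) ⬝ᵥ M *ᵥ B 1) = Matrix.trace M := by
  rw [← trace_mul_outerm, ← trace_mul_outerm, ← Matrix.trace_add, ← Matrix.mul_add,
    onb_complete hB, mul_one]

private lemma mub_tr {v w : Fin 2 → ℂ} (h : ‖star v ⬝ᵥ w‖ ^ 2 = 1/2) :
    Matrix.trace (outerm v * outerm w) = (1/2 : ℂ) := by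
  rw [trace_outerm_mul_outerm]
  rw [show (star w ⬝ᵥ v : ℂ) = star (star v ⬝ᵥ w) by
    rw [Matrix.star_dotProduct]]
  rw [Complex.star_def, Complex.mul_conj]
  rw [show Complex.normSq (star v ⬝ᵥ w) = ‖star v ⬝ᵥ w‖ ^ 2 by
    rw [Complex.normSq_eq_norm_sq]]
  rw [h]
  norm_num

private lemma FF_cross {B C : Fin 2 → Fin 2 → ℂ}
    (h : ∀ i j, ‖star (B i) ⬝ᵥ C j‖ ^ 2 = 1/2) :
    Matrix.trace ((outerm (B 0) - outerm (B 1)) * (outerm (C 0) - outerm (C 1))) = 0 := by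
  simp only [Matrix.sub_mul, Matrix.mul_sub, Matrix.trace_sub]
  rw [mub_tr (h 0 0), mub_tr (h 0 1), mub_tr (h 1 0), mub_tr (h 1 1)]
  ring

private lemma FF_same {B : Fin 2 → Fin 2 → ℂ} (hB : IsONB B) :
    Matrix.trace ((outerm (B 0) - outerm (B 1)) * (outerm (B 0) - outerm (B 1))) = 2 := by
  simp only [Matrix.sub_mul, Matrix.mul_sub, Matrix.trace_sub, trace_outerm_mul_outerm]
  rw [hB 0 0, hB 0 1, hB 1 0, hB 1 1]
  norm_num

private lemma F_trace {B : Fin 2 → Fin 2 → ℂ} (hB : IsONB B) :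
    Matrix.trace (outerm (B 0) - outerm (B 1)) = 0 := by
  rw [Matrix.trace_sub, trace_outerm, trace_outerm, hB 0 0, hB 1 1]
  norm_num

private lemma bessel_main {M : Matrix (Fin 2) (Fin 2) ℂ} (hM : M.PosSemidef)
    {B₁ B₂ B₃ : Fin 2 → Fin 2 → ℂ}
    (hB₁ : IsONB B₁) (hB₂ : IsONB B₂) (hB₃ : IsONB B₃)
    (h12 : ∀ i j, ‖star (B₁ i) ⬝ᵥ B₂ j‖ ^ 2 = 1/2)
    (h13 : ∀ i j, ‖star (B₁ i) ⬝ᵥ B₃ j‖ ^ 2 = 1/2)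
    (h23 : ∀ i j, ‖star (B₂ i) ⬝ᵥ B₃ j‖ ^ 2 = 1/2) :
    ((star (B₁ 0) ⬝ᵥ M *ᵥ B₁ 0).re - (star (B₁ 1) ⬝ᵥ M *ᵥ B₁ 1).re)^2
    + ((star (B₂ 0) ⬝ᵥ M *ᵥ B₂ 0).re - (star (B₂ 1) ⬝ᵥ M *ᵥ B₂ 1).re)^2
    + ((star (B₃ 0) ⬝ᵥ M *ᵥ B₃ 0).re - (star (B₃ 1) ⬝ᵥ M *ᵥ B₃ 1).re)^2
    ≤ ((Matrix.trace M).re)^2 := by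
  have hQ : ∀ v : Fin 2 → ℂ, star v ⬝ᵥ M *ᵥ v = (((star v ⬝ᵥ M *ᵥ v).re : ℝ) : ℂ) := by
    intro v
    have him : (star v ⬝ᵥ M *ᵥ v).im = 0 := by
      have := (Complex.le_def.mp (hM.dotProduct_mulVec_nonneg v)).2
      simp only [Complex.zero_im] at this
      exact this.symm
    apply Complex.ext
    · rw [Complex.ofReal_re]
    · rw [Complex.ofReal_im, him]
  set t : ℝ := (Matrix.trace M).re with htdef
  set c₁ : ℝ := (star (B₁ 0) ⬝ᵥ M *ᵥ B₁ 0).re - (star (B₁ 1) ⬝ᵥ M *ᵥ B₁ 1).re with hc₁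
  set c₂ : ℝ := (star (B₂ 0) ⬝ᵥ M *ᵥ B₂ 0).re - (star (B₂ 1) ⬝ᵥ M *ᵥ B₂ 1).re with hc₂
  set c₃ : ℝ := (star (B₃ 0) ⬝ᵥ M *ᵥ B₃ 0).re - (star (B₃ 1) ⬝ᵥ M *ᵥ B₃ 1).re with hc₃
  have htr : Matrix.trace M = ((t : ℝ) : ℂ) := by
    have hsum := onb_q_sum (M := M) hB₁
    have ht2 : t = (star (B₁ 0) ⬝ᵥ M *ᵥ B₁ 0).re + (star (B₁ 1) ⬝ᵥ M *ᵥ B₁ 1).re := by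
      rw [htdef, ← hsum, Complex.add_re]
    rw [ht2, ← hsum, hQ (B₁ 0), hQ (B₁ 1)]
    simp
  set F₁ : Matrix (Fin 2) (Fin 2) ℂ := outerm (B₁ 0) - outerm (B₁ 1) with hF₁
  set F₂ : Matrix (Fin 2) (Fin 2) ℂ := outerm (B₂ 0) - outerm (B₂ 1) with hF₂
  set F₃ : Matrix (Fin 2) (Fin 2) ℂ := outerm (B₃ 0) - outerm (B₃ 1) with hF₃
  have hMF₁ : Matrix.trace (M * F₁) = ((c₁ : ℝ) : ℂ) := by
    rw [hF₁, Matrix.mul_sub, Matrix.trace_sub, trace_mul_outerm, trace_mul_outerm,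
      hQ (B₁ 0), hQ (B₁ 1), hc₁]
    push_cast
    ring
  have hMF₂ : Matrix.trace (M * F₂) = ((c₂ : ℝ) : ℂ) := by
    rw [hF₂, Matrix.mul_sub, Matrix.trace_sub, trace_mul_outerm, trace_mul_outerm,
      hQ (B₂ 0), hQ (B₂ 1), hc₂]
    push_cast
    ring
  have hMF₃ : Matrix.trace (M * F₃) = ((c₃ : ℝ) : ℂ) := by
    rw [hF₃, Matrix.mul_sub, Matrix.trace_sub, trace_mul_outerm, trace_mul_outerm,
      hQ (B₃ 0), hQ (B₃ 1), hc₃]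
    push_cast
    ring
  have hF₁M : Matrix.trace (F₁ * M) = ((c₁ : ℝ) : ℂ) := by
    rw [Matrix.trace_mul_comm]; exact hMF₁
  have hF₂M : Matrix.trace (F₂ * M) = ((c₂ : ℝ) : ℂ) := by
    rw [Matrix.trace_mul_comm]; exact hMF₂
  have hF₃M : Matrix.trace (F₃ * M) = ((c₃ : ℝ) : ℂ) := by
    rw [Matrix.trace_mul_comm]; exact hMF₃
  have hFF₁₁ : Matrix.trace (F₁ * F₁) = 2 := FF_same hB₁
  have hFF₂₂ : Matrix.trace (F₂ * F₂) = 2 := FF_same hB₂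
  have hFF₃₃ : Matrix.trace (F₃ * F₃) = 2 := FF_same hB₃
  have hFF₁₂ : Matrix.trace (F₁ * F₂) = 0 := FF_cross h12
  have hFF₁₃ : Matrix.trace (F₁ * F₃) = 0 := FF_cross h13
  have hFF₂₃ : Matrix.trace (F₂ * F₃) = 0 := FF_cross h23
  have hFF₂₁ : Matrix.trace (F₂ * F₁) = 0 := by rw [Matrix.trace_mul_comm]; exact hFF₁₂
  have hFF₃₁ : Matrix.trace (F₃ * F₁) = 0 := by rw [Matrix.trace_mul_comm]; exact hFF₁₃
  have hFF₃₂ : Matrix.trace (F₃ * F₂) = 0 := by rw [Matrix.trace_mul_comm]; exact hFF₂₃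
  have hFt₁ : Matrix.trace F₁ = 0 := F_trace hB₁
  have hFt₂ : Matrix.trace F₂ = 0 := F_trace hB₂
  have hFt₃ : Matrix.trace F₃ = 0 := F_trace hB₃
  set G : Matrix (Fin 2) (Fin 2) ℂ :=
    M - ((t/2 : ℝ) : ℂ) • 1 - ((c₁/2 : ℝ) : ℂ) • F₁ - ((c₂/2 : ℝ) : ℂ) • F₂
      - ((c₃/2 : ℝ) : ℂ) • F₃ with hG
  have hGH : G.IsHermitian := by
    show Gᴴ = G
    rw [hG]
    simp only [Matrix.conjTranspose_sub, Matrix.conjTranspose_smul,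
      Matrix.conjTranspose_one, hM.1.eq, hF₁, hF₂, hF₃,
      outerm_conjTranspose, Complex.star_def, Complex.conj_ofReal]
  have hGG : Matrix.trace (G * G)
      = Matrix.trace (M * M) - ((t^2/2 + (c₁^2 + c₂^2 + c₃^2)/2 : ℝ) : ℂ) := by
    rw [hG]
    simp only [Matrix.sub_mul, Matrix.mul_sub, Matrix.smul_mul, Matrix.mul_smul,
      Matrix.trace_sub, Matrix.trace_smul, smul_eq_mul, Matrix.one_mul, Matrix.mul_one,
      smul_smul]
    rw [hMF₁, hMF₂, hMF₃, hF₁M, hF₂M, hF₃M, hFF₁₁, hFF₂₂, hFF₃₃, hFF₁₂, hFF₁₃,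
      hFF₂₃, hFF₂₁, hFF₃₁, hFF₃₂, hFt₁, hFt₂, hFt₃, htr]
    rw [Matrix.trace_one]
    simp only [Fintype.card_fin]
    push_cast
    ring
  have h0 : 0 ≤ (Matrix.trace (G * G)).re := trace_sq_re_nonneg hGH
  have hMM := trace_mul_self_re_le hM
  rw [hGG] at h0
  rw [Complex.sub_re, Complex.ofReal_re] at h0
  rw [← htdef] at hMM
  have hfin : t ^ 2 / 2 + (c₁ ^ 2 + c₂ ^ 2 + c₃ ^ 2) / 2 ≤ t ^ 2 :=
    le_trans (by linarith [h0]) hMM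
  clear_value t c₁ c₂ c₃
  linarith [hfin]


private lemma outProb_nonneg {M : Matrix (Fin 2) (Fin 2) ℂ} (hM : M.PosSemidef)
    (v : Fin 2 → ℂ) : 0 ≤ outProb M v := by
  have := (Complex.le_def.mp (hM.dotProduct_mulVec_nonneg v)).1
  simpa [outProb] using this

private lemma half_div_half (x c : ℝ) : (1/2 * x) / (c/2) = x / c := by
  rcases eq_or_ne c 0 with rfl | h
  · simp
  · field_simp

private lemma shannon_uniform_two : shannonEntropy (fun _ : Fin 2 => (1:ℝ)/2) = 1 := by
  have hl : Real.logb 2 ((1:ℝ)/2) = -1 := by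
    rw [show (1:ℝ)/2 = 2⁻¹ by norm_num, Real.logb_inv,
      Real.logb_self_eq_one (by norm_num)]
  simp [shannonEntropy, Fin.sum_univ_two, hl]

private lemma mutInfo_uniform {S : Type*} [Fintype S] (B : Fin 2 → Fin 2 → ℂ)
    (E : S → Matrix (Fin 2) (Fin 2) ℂ) :
    mutInfo B (fun _ => (1:ℝ)/2) E
      = 1 - ∑ s, ((outProb (E s) (B 0) + outProb (E s) (B 1))/2) *
          shannonEntropy (fun i =>
            outProb (E s) (B i) / (outProb (E s) (B 0) + outProb (E s) (B 1))) := by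
  simp only [mutInfo, shannon_uniform_two]
  congr 1
  apply Finset.sum_congr rfl
  intro s _
  have e1 : (∑ i, (1:ℝ)/2 * outProb (E s) (B i))
      = (outProb (E s) (B 0) + outProb (E s) (B 1))/2 := by
    rw [Fin.sum_univ_two]; ring
  rw [e1]
  congr 1
  exact congrArg shannonEntropy (funext fun i => half_div_half _ _)

/-- Three qubit MUBs, uniform priors: `I₁ + I₂ + I₃ ≤ 1`. -/
theorem qubit_three_mub_uniform_bound
    {S : Type*} [Fintype S]
    (B₁ B₂ B₃ : Fin 2 → Fin 2 → ℂ)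
    (hB₁ : IsONB B₁) (hB₂ : IsONB B₂) (hB₃ : IsONB B₃)
    (h12 : AreMUB B₁ B₂) (h13 : AreMUB B₁ B₃) (h23 : AreMUB B₂ B₃)
    (E : S → Matrix (Fin 2) (Fin 2) ℂ) (hE : IsPOVM E) :
    mutInfo B₁ (fun _ => (1 : ℝ) / 2) E + mutInfo B₂ (fun _ => (1 : ℝ) / 2) E
      + mutInfo B₃ (fun _ => (1 : ℝ) / 2) E ≤ 1 := by
  obtain ⟨hpsd, hsumE⟩ := hE
  have h12' : ∀ i j, ‖star (B₁ i) ⬝ᵥ B₂ j‖ ^ 2 = 1/2 := by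
    intro i j; have := h12 i j; norm_num at this ⊢; exact this
  have h13' : ∀ i j, ‖star (B₁ i) ⬝ᵥ B₃ j‖ ^ 2 = 1/2 := by
    intro i j; have := h13 i j; norm_num at this ⊢; exact this
  have h23' : ∀ i j, ‖star (B₂ i) ⬝ᵥ B₃ j‖ ^ 2 = 1/2 := by
    intro i j; have := h23 i j; norm_num at this ⊢; exact this
  set t : S → ℝ := fun s => (Matrix.trace (E s)).re with htdef
  have hWsum : ∀ (B : Fin 2 → Fin 2 → ℂ), IsONB B → ∀ s,
      outProb (E s) (B 0) + outProb (E s) (B 1) = t s := by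
    intro B hB s
    have := congrArg Complex.re (onb_q_sum (M := E s) hB)
    simpa [outProb, Complex.add_re] using this
  have htsum : ∑ s, t s = 2 := by
    have h1 : ∑ s, Matrix.trace (E s) = 2 := by
      rw [← Matrix.trace_sum, hsumE, Matrix.trace_one]
      simp
    have h2 : (∑ s, Matrix.trace (E s)).re = ∑ s, t s := by
      rw [Complex.re_sum]
    rw [← h2, h1]
    simp
  -- the per-outcome key bound
  have hkey : ∀ s,
      t s ≤ ((outProb (E s) (B₁ 0) + outProb (E s) (B₁ 1))/2) *
              shannonEntropy (fun i =>
                outProb (E s) (B₁ i) / (outProb (E s) (B₁ 0) + outProb (E s) (B₁ 1)))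
          + ((outProb (E s) (B₂ 0) + outProb (E s) (B₂ 1))/2) *
              shannonEntropy (fun i =>
                outProb (E s) (B₂ i) / (outProb (E s) (B₂ 0) + outProb (E s) (B₂ 1)))
          + ((outProb (E s) (B₃ 0) + outProb (E s) (B₃ 1))/2) *
              shannonEntropy (fun i =>
                outProb (E s) (B₃ i) / (outProb (E s) (B₃ 0) + outProb (E s) (B₃ 1))) := by
    intro s
    have hab₁ := hWsum B₁ hB₁ s
    have hab₂ := hWsum B₂ hB₂ s
    have hab₃ := hWsum B₃ hB₃ s
    have ht0 : 0 ≤ t s := by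
      rw [← hab₁]
      have := outProb_nonneg (hpsd s) (B₁ 0)
      have := outProb_nonneg (hpsd s) (B₁ 1)
      linarith
    rcases eq_or_lt_of_le ht0 with hz | htpos
    · rw [hab₁, hab₂, hab₃, ← hz]
      simp
    · -- positive trace case
      have hbess : (outProb (E s) (B₁ 0) - outProb (E s) (B₁ 1))^2
          + (outProb (E s) (B₂ 0) - outProb (E s) (B₂ 1))^2
          + (outProb (E s) (B₃ 0) - outProb (E s) (B₃ 1))^2 ≤ (t s)^2 :=
        bessel_main (hpsd s) hB₁ hB₂ hB₃ h12' h13' h23'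
      have hHge : ∀ (B : Fin 2 → Fin 2 → ℂ), IsONB B →
          (outProb (E s) (B 0) + outProb (E s) (B 1) = t s) →
          1 - ((outProb (E s) (B 0) - outProb (E s) (B 1))/t s)^2 ≤
          shannonEntropy (fun i =>
            outProb (E s) (B i) / (outProb (E s) (B 0) + outProb (E s) (B 1))) := by
        intro B hB hab
        set a := outProb (E s) (B 0) with hadef
        set b := outProb (E s) (B 1) with hbdef
        have ha0 : 0 ≤ a := outProb_nonneg (hpsd s) (B 0)
        have hb0 : 0 ≤ b := outProb_nonneg (hpsd s) (B 1)
        set x : ℝ := (a - b)/t s with hxdef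
        have hx1 : -1 ≤ x := by
          rw [hxdef, le_div_iff₀ htpos]
          linarith
        have hx2 : x ≤ 1 := by
          rw [hxdef, div_le_one htpos]
          linarith
        have e0 : a / (a + b) = (1 + x)/2 := by
          rw [hab, hxdef]
          field_simp
          linear_combination hab
        have e1 : b / (a + b) = (1 - x)/2 := by
          rw [hab, hxdef]
          field_simp
          linear_combination hab
        have hsh : shannonEntropy (fun i => outProb (E s) (B i) / (a + b))
            = -((1 + x)/2 * Real.logb 2 ((1 + x)/2)
              + (1 - x)/2 * Real.logb 2 ((1 - x)/2)) := by
          simp only [shannonEntropy, Fin.sum_univ_two]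
          rw [← hadef, ← hbdef, e0, e1]
        rw [hsh]
        exact binEnt_ge hx1 hx2
      have hH₁ := hHge B₁ hB₁ hab₁
      have hH₂ := hHge B₂ hB₂ hab₂
      have hH₃ := hHge B₃ hB₃ hab₃
      set c₁ : ℝ := outProb (E s) (B₁ 0) - outProb (E s) (B₁ 1) with hc₁
      set c₂ : ℝ := outProb (E s) (B₂ 0) - outProb (E s) (B₂ 1) with hc₂
      set c₃ : ℝ := outProb (E s) (B₃ 0) - outProb (E s) (B₃ 1) with hc₃
      have hxsum : (c₁/t s)^2 + (c₂/t s)^2 + (c₃/t s)^2 ≤ 1 := by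
        have ht2 : (0:ℝ) < (t s)^2 := by positivity
        rw [div_pow, div_pow, div_pow, ← add_div, ← add_div, div_le_one ht2]
        exact hbess
      rw [hab₁] at hH₁
      rw [hab₂] at hH₂
      rw [hab₃] at hH₃
      rw [hab₁, hab₂, hab₃]
      set H₁ := shannonEntropy (fun i => outProb (E s) (B₁ i) / t s)
      set H₂ := shannonEntropy (fun i => outProb (E s) (B₂ i) / t s)
      set H₃ := shannonEntropy (fun i => outProb (E s) (B₃ i) / t s)
      have hsum2 : 2 ≤ H₁ + H₂ + H₃ := by
        have := hxsum
        nlinarith [hH₁, hH₂, hH₃]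
      nlinarith [mul_nonneg (le_of_lt htpos)
        (by linarith [hsum2] : (0:ℝ) ≤ H₁ + H₂ + H₃ - 2)]
  rw [mutInfo_uniform B₁ E, mutInfo_uniform B₂ E, mutInfo_uniform B₃ E]
  have hcomb : (∑ s, ((outProb (E s) (B₁ 0) + outProb (E s) (B₁ 1))/2) *
              shannonEntropy (fun i =>
                outProb (E s) (B₁ i) / (outProb (E s) (B₁ 0) + outProb (E s) (B₁ 1))))
      + (∑ s, ((outProb (E s) (B₂ 0) + outProb (E s) (B₂ 1))/2) *
              shannonEntropy (fun i =>
                outProb (E s) (B₂ i) / (outProb (E s) (B₂ 0) + outProb (E s) (B₂ 1))))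
      + (∑ s, ((outProb (E s) (B₃ 0) + outProb (E s) (B₃ 1))/2) *
              shannonEntropy (fun i =>
                outProb (E s) (B₃ i) / (outProb (E s) (B₃ 0) + outProb (E s) (B₃ 1))))
      ≥ 2 := by
    rw [← Finset.sum_add_distrib, ← Finset.sum_add_distrib]
    exact le_trans (le_of_eq htsum.symm) (Finset.sum_le_sum (fun s _ => hkey s))
  linarith [hcomb]

end
end

section
/- Let Alice prepare a qubit in an eigenstate of σ_x with prior probabilities (1+δ)/2 and (1−δ)/2 (−1 ≤ δ ≤ 1), and let Bob measure with the two-outcome POVM M_± = (1/2)((1 ± R_0)I ± R⃗·σ⃗), where R⃗ = (R_x, R_y, R_z), R = |R⃗| > 0, and |R_0| + R ≤ 1. Then Bob's mutual information about the σ_x basis satisfies I_x ≤ R_x²/R². -/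
open scoped BigOperators ComplexOrder
open Matrix

noncomputable section

/-- The eigenbasis of the Pauli matrix σ_x : (1,1)/√2 and (1,-1)/√2. -/
def xbasis : Fin 2 → Fin 2 → ℂ :=
  ![![(Real.sqrt 2 : ℂ)⁻¹, (Real.sqrt 2 : ℂ)⁻¹],
    ![(Real.sqrt 2 : ℂ)⁻¹, -(Real.sqrt 2 : ℂ)⁻¹]]

/-- The eigenbasis of the Pauli matrix σ_y : (1,i)/√2 and (1,-i)/√2. -/
def ybasis : Fin 2 → Fin 2 → ℂ :=
  ![![(Real.sqrt 2 : ℂ)⁻¹, (Real.sqrt 2 : ℂ)⁻¹ * Complex.I],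
    ![(Real.sqrt 2 : ℂ)⁻¹, -((Real.sqrt 2 : ℂ)⁻¹ * Complex.I)]]

/-- The eigenbasis of the Pauli matrix σ_z : the standard basis. -/
def zbasis : Fin 2 → Fin 2 → ℂ := ![![1, 0], ![0, 1]]

/-- The Pauli matrix σ_x. -/
def pauliX : Matrix (Fin 2) (Fin 2) ℂ := !![0, 1; 1, 0]

/-- The Pauli matrix σ_y. -/
def pauliY : Matrix (Fin 2) (Fin 2) ℂ := !![0, -Complex.I; Complex.I, 0]

/-- The Pauli matrix σ_z. -/
def pauliZ : Matrix (Fin 2) (Fin 2) ℂ := !![1, 0; 0, -1]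


namespace QIAux

open Real

noncomputable def ent2 (u v : ℝ) : ℝ :=
  Real.negMulLog u + Real.negMulLog v - Real.negMulLog (u + v)

lemma ent2_smul (c u v : ℝ) : ent2 (c * u) (c * v) = c * ent2 u v := by
  have h : c * u + c * v = c * (u + v) := by ring
  simp only [ent2, h, Real.negMulLog_mul]
  ring

lemma logsum2 (a b c d : ℝ) (ha : 0 ≤ a) (hc : 0 ≤ c) (hab : a ≤ b) (hcd : c ≤ d) :
    (a + c) * Real.log (a + c) - (a + c) * Real.log (b + d) ≤
      (a * Real.log a - a * Real.log b) + (c * Real.log c - c * Real.log d) := by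
  rcases ha.eq_or_lt with h | hapos
  · subst h
    simp only [zero_add, zero_mul, sub_zero, zero_sub, neg_zero, add_zero]
    rcases hc.eq_or_lt with h2 | hcpos
    · subst h2; simp
    · have hd : 0 < d := lt_of_lt_of_le hcpos hcd
      have hlog : Real.log d ≤ Real.log (b + d) :=
        Real.log_le_log hd (by linarith)
      nlinarith
  rcases hc.eq_or_lt with h2 | hcpos
  · subst h2
    have hb : 0 < b := lt_of_lt_of_le hapos hab
    simp only [add_zero, zero_mul, sub_zero, zero_sub, neg_zero]
    have hlog : Real.log b ≤ Real.log (b + d) :=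
      Real.log_le_log hb (by linarith)
    nlinarith
  · have hb : 0 < b := lt_of_lt_of_le hapos hab
    have hd : 0 < d := lt_of_lt_of_le hcpos hcd
    have hac : 0 < a + c := by linarith
    have hbd : 0 < b + d := by linarith
    have h1 : 1 - (b * (a + c)) / (a * (b + d)) ≤
        Real.log (a * (b + d)) - Real.log (b * (a + c)) := by
      have := Real.one_sub_inv_le_log_of_pos
        (x := (a * (b + d)) / (b * (a + c))) (by positivity)
      rwa [Real.log_div (by positivity) (by positivity), inv_div] at this
    have h2 : 1 - (d * (a + c)) / (c * (b + d)) ≤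
        Real.log (c * (b + d)) - Real.log (d * (a + c)) := by
      have := Real.one_sub_inv_le_log_of_pos
        (x := (c * (b + d)) / (d * (a + c))) (by positivity)
      rwa [Real.log_div (by positivity) (by positivity), inv_div] at this
    rw [Real.log_mul (by positivity) (by positivity),
        Real.log_mul (by positivity) (by positivity)] at h1
    rw [Real.log_mul (by positivity) (by positivity),
        Real.log_mul (by positivity) (by positivity)] at h2
    have e1 := mul_le_mul_of_nonneg_left h1 ha
    have e2 := mul_le_mul_of_nonneg_left h2 hc
    have hzero : a * (1 - (b * (a + c)) / (a * (b + d)))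
        + c * (1 - (d * (a + c)) / (c * (b + d))) = 0 := by
      field_simp
      ring
    nlinarith [e1, e2, hzero]

lemma ent2_superadd {x1 x2 y1 y2 : ℝ} (h1 : 0 ≤ x1) (h2 : 0 ≤ x2) (h3 : 0 ≤ y1) (h4 : 0 ≤ y2) :
    ent2 x1 x2 + ent2 y1 y2 ≤ ent2 (x1 + y1) (x2 + y2) := by
  have i1 := logsum2 x1 (x1 + x2) y1 (y1 + y2) h1 h3 (by linarith) (by linarith)
  have i2 := logsum2 x2 (x1 + x2) y2 (y1 + y2) h2 h4 (by linarith) (by linarith)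
  have e : (x1 + x2) + (y1 + y2) = (x1 + y1) + (x2 + y2) := by ring
  rw [e] at i1 i2
  simp only [ent2, Real.negMulLog]
  nlinarith [i1, i2]

private noncomputable def gfun : ℝ → ℝ :=
  fun p => Real.binEntropy p - 4 * Real.log 2 * (p * (1 - p))

private noncomputable def pfun : ℝ → ℝ :=
  fun p => Real.log (1 - p) - Real.log p - 4 * Real.log 2 * (1 - 2 * p)

private lemma hasDerivAt_gfun {x : ℝ} (hx : x ∈ Set.Ioo (0:ℝ) 1) :
    HasDerivAt gfun (pfun x) x := by
  have h1 := Real.hasDerivAt_binEntropy (ne_of_gt hx.1) (ne_of_lt hx.2)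
  have h2 : HasDerivAt (fun p : ℝ => 4 * Real.log 2 * (p * (1 - p)))
      (4 * Real.log 2 * (1 - 2 * x)) x := by
    have h3 : HasDerivAt (fun p : ℝ => p * (1 - p)) (1 - 2 * x) x := by
      have := (hasDerivAt_id x).mul ((hasDerivAt_id x).const_sub 1)
      refine this.congr_deriv ?_
      simp only [id_eq]
      ring
    have := h3.const_mul (4 * Real.log 2)
    convert this using 1
  exact h1.sub h2

private lemma hasDerivAt_pfun {x : ℝ} (hx : x ∈ Set.Ioo (0:ℝ) 1) :
    HasDerivAt pfun (8 * Real.log 2 - (1 - x)⁻¹ - x⁻¹) x := by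
  have hx1 : (1:ℝ) - x ≠ 0 := by have := hx.2; intro h; linarith [h]
  have h1 : HasDerivAt (fun p : ℝ => Real.log (1 - p)) (-(1 - x)⁻¹) x := by
    have := (Real.hasDerivAt_log hx1).comp x ((hasDerivAt_id x).const_sub 1)
    refine this.congr_deriv ?_
    simp
  have h2 := Real.hasDerivAt_log (ne_of_gt hx.1)
  have h3 : HasDerivAt (fun p : ℝ => 4 * Real.log 2 * (1 - 2 * p)) (-(8 * Real.log 2)) x := by
    have := ((hasDerivAt_id x).const_mul (2:ℝ)).const_sub 1 |>.const_mul (4 * Real.log 2)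
    refine this.congr_deriv ?_
    ring
  have := (h1.sub h2).sub h3
  refine this.congr_deriv ?_
  ring

set_option maxHeartbeats 1000000 in
lemma key_half (p : ℝ) (h0 : 2⁻¹ ≤ p) (h1 : p ≤ 1) :
    4 * Real.log 2 * (p * (1 - p)) ≤ Real.binEntropy p := by
  have hc : (0.6931471803 : ℝ) < Real.log 2 := Real.log_two_gt_d9
  set c := Real.log 2 with hcdef
  set s := Real.sqrt (1 - 1 / (2 * c)) with hsdef
  have hinner0 : (0:ℝ) ≤ 1 - 1 / (2 * c) := by
    rw [sub_nonneg, div_le_one (by linarith)]; linarith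
  have hsq : s ^ 2 = 1 - 1 / (2 * c) := Real.sq_sqrt hinner0
  have hs0 : 0 ≤ s := Real.sqrt_nonneg _
  have hs1 : s < 1 := by
    nlinarith [hsq, hs0, div_pos (by norm_num : (0:ℝ) < 1) (by linarith : (0:ℝ) < 2 * c)]
  set τ := (1 + s) / 2 with hτdef
  have hτhalf : 2⁻¹ ≤ τ := by rw [hτdef]; norm_num; linarith
  have hτlt : τ < 1 := by rw [hτdef]; linarith
  have hττ : τ * (1 - τ) = 1 / (8 * c) := by
    have e : τ * (1 - τ) = (1 - s ^ 2) / 4 := by rw [hτdef]; ring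
    rw [e, hsq]
    field_simp
    ring
  clear_value τ s
  have hmemIoo : ∀ x ∈ Set.Icc (2⁻¹:ℝ) τ, x ∈ Set.Ioo (0:ℝ) 1 :=
    fun x hx => ⟨by have := hx.1; norm_num at this ⊢; linarith, lt_of_le_of_lt hx.2 hτlt⟩
  have hmφ : MonotoneOn pfun (Set.Icc (2⁻¹:ℝ) τ) := by
    apply monotoneOn_of_deriv_nonneg (convex_Icc _ _)
    · exact fun x hx => (hasDerivAt_pfun (hmemIoo x hx)).continuousAt.continuousWithinAt
    · rw [interior_Icc]
      exact fun x hx =>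
        (hasDerivAt_pfun (hmemIoo x (Set.mem_Icc_of_Ioo hx))).differentiableAt.differentiableWithinAt
    · rw [interior_Icc]
      intro x hx
      have hxm := hmemIoo x (Set.mem_Icc_of_Ioo hx)
      rw [(hasDerivAt_pfun hxm).deriv]
      have hx0 : (0:ℝ) < x := hxm.1
      have hx1 : (0:ℝ) < 1 - x := by have := hxm.2; linarith
      have hprod : 1 / (8 * c) ≤ x * (1 - x) := by
        rw [← hττ]
        have ha : x ≤ τ := le_of_lt hx.2
        have hb : 1 ≤ x + τ := by
          have := hx.1; norm_num at this; linarith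
        nlinarith
      have hsum : (1 - x)⁻¹ + x⁻¹ = 1 / (x * (1 - x)) := by
        field_simp; ring
      have h8c : (0:ℝ) < 8 * c := by linarith
      have e8 : 8 * c * (1 / (8 * c)) = 1 := by field_simp
      have : 1 / (x * (1 - x)) ≤ 8 * c := by
        rw [div_le_iff₀ (by positivity)]
        nlinarith [mul_le_mul_of_nonneg_left hprod h8c.le, e8]
      linarith [hsum, this]
  have hφ0 : pfun 2⁻¹ = 0 := by norm_num [pfun]
  have hφnn : ∀ x ∈ Set.Icc (2⁻¹:ℝ) τ, 0 ≤ pfun x := by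
    intro x hx
    have := hmφ (Set.left_mem_Icc.mpr hτhalf) hx hx.1
    rw [hφ0] at this; exact this
  have hcontg : Continuous gfun := by
    unfold gfun; fun_prop
  have hmg : MonotoneOn gfun (Set.Icc (2⁻¹:ℝ) τ) := by
    apply monotoneOn_of_deriv_nonneg (convex_Icc _ _) hcontg.continuousOn
    · rw [interior_Icc]
      exact fun x hx =>
        (hasDerivAt_gfun (hmemIoo x (Set.mem_Icc_of_Ioo hx))).differentiableAt.differentiableWithinAt
    · rw [interior_Icc]
      intro x hx
      rw [(hasDerivAt_gfun (hmemIoo x (Set.mem_Icc_of_Ioo hx))).deriv]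
      exact hφnn x (Set.mem_Icc_of_Ioo hx)
  have hg_half : gfun 2⁻¹ = 0 := by
    unfold gfun
    rw [Real.binEntropy_two_inv]
    ring
  have region1 : ∀ x ∈ Set.Icc (2⁻¹:ℝ) τ, 0 ≤ gfun x := by
    intro x hx
    have := hmg (Set.left_mem_Icc.mpr hτhalf) hx hx.1
    rw [hg_half] at this; exact this
  rcases le_or_gt p τ with hpτ | hpτ
  · have := region1 p ⟨h0, hpτ⟩
    unfold gfun at this; linarith
  · have hconc : ConcaveOn ℝ (Set.Icc τ (1:ℝ)) gfun := by
      apply concaveOn_of_hasDerivWithinAt2_nonpos (f' := pfun)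
        (f'' := fun x => 8 * Real.log 2 - (1 - x)⁻¹ - x⁻¹)
        (convex_Icc _ _) hcontg.continuousOn
      · rw [interior_Icc]
        intro x hx
        have hxm : x ∈ Set.Ioo (0:ℝ) 1 := ⟨lt_of_le_of_lt (by linarith) hx.1, hx.2⟩
        exact (hasDerivAt_gfun hxm).hasDerivWithinAt
      · rw [interior_Icc]
        intro x hx
        have hxm : x ∈ Set.Ioo (0:ℝ) 1 := ⟨lt_of_le_of_lt (by linarith) hx.1, hx.2⟩
        exact (hasDerivAt_pfun hxm).hasDerivWithinAt
      · rw [interior_Icc]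
        intro x hx
        have hxm : x ∈ Set.Ioo (0:ℝ) 1 := ⟨lt_of_le_of_lt (by linarith) hx.1, hx.2⟩
        have hx0 : (0:ℝ) < x := hxm.1
        have hx1 : (0:ℝ) < 1 - x := by have := hxm.2; linarith
        have hprod : x * (1 - x) ≤ 1 / (8 * c) := by
          rw [← hττ]
          have ha : τ ≤ x := le_of_lt hx.1
          have hb : 1 ≤ x + τ := by
            have : (2:ℝ)⁻¹ ≤ τ := hτhalf
            norm_num at this; linarith
          nlinarith
        have hsum : (1 - x)⁻¹ + x⁻¹ = 1 / (x * (1 - x)) := by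
          field_simp; ring
        have h8c : (0:ℝ) < 8 * c := by linarith
        have e8 : 8 * c * (1 / (8 * c)) = 1 := by field_simp
        have : 8 * c ≤ 1 / (x * (1 - x)) := by
          rw [le_div_iff₀ (by positivity)]
          nlinarith [mul_le_mul_of_nonneg_left hprod h8c.le, e8]
        linarith [hsum, this]
    have hgτ : 0 ≤ gfun τ := region1 τ ⟨hτhalf, le_refl _⟩
    have hg1 : gfun 1 = 0 := by norm_num [gfun]
    set lam := (1 - p) / (1 - τ) with hlam
    set mu := (p - τ) / (1 - τ) with hmu
    have hτ1 : (0:ℝ) < 1 - τ := by linarith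
    have hlam0 : 0 ≤ lam := div_nonneg (by linarith) hτ1.le
    have hmu0 : 0 ≤ mu := div_nonneg (by linarith) hτ1.le
    have hsmu : lam + mu = 1 := by
      rw [hlam, hmu, ← add_div, div_eq_one_iff_eq hτ1.ne']
      ring
    have hcomb : lam * τ + mu * 1 = p := by
      rw [hlam, hmu]
      field_simp
      ring
    have hmem1 : τ ∈ Set.Icc τ (1:ℝ) := ⟨le_refl _, hτlt.le⟩
    have hmem2 : (1:ℝ) ∈ Set.Icc τ (1:ℝ) := ⟨hτlt.le, le_refl _⟩
    have h2 := hconc.2 hmem1 hmem2 hlam0 hmu0 hsmu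
    simp only [smul_eq_mul] at h2
    rw [hcomb, hg1] at h2
    have hfin : 0 ≤ gfun p := le_trans (by nlinarith) h2
    unfold gfun at hfin; linarith

lemma key_ineq (p : ℝ) (h0 : 0 ≤ p) (h1 : p ≤ 1) :
    4 * Real.log 2 * (p * (1 - p)) ≤ Real.binEntropy p := by
  rcases le_total (2⁻¹ : ℝ) p with h | h
  · exact key_half p h h1
  · have := key_half (1 - p) (by norm_num; linarith) (by linarith)
    rw [Real.binEntropy_one_sub] at this
    calc 4 * Real.log 2 * (p * (1 - p))
        = 4 * Real.log 2 * ((1 - p) * (1 - (1 - p))) := by ring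
    _ ≤ _ := this

lemma master (d n wp wm : ℝ) (hd1 : -1 ≤ d) (hd2 : d ≤ 1) (hn1 : -1 ≤ n) (hn2 : n ≤ 1)
    (hwp0 : 0 ≤ wp) (hwp1 : wp ≤ 1) (hwm0 : 0 ≤ wm) (hwm1 : wm ≤ 1) :
    Real.negMulLog ((1 + d) / 2) + Real.negMulLog ((1 - d) / 2)
      - ent2 (((1 + d) / 2) * (((1 + n) / 2) * wp + ((1 - n) / 2) * wm))
             (((1 - d) / 2) * (((1 - n) / 2) * wp + ((1 + n) / 2) * wm))
      - ent2 (((1 + d) / 2) * (((1 + n) / 2) * (1 - wp) + ((1 - n) / 2) * (1 - wm)))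
             (((1 - d) / 2) * (((1 - n) / 2) * (1 - wp) + ((1 + n) / 2) * (1 - wm)))
      ≤ n ^ 2 * Real.log 2 := by
  set p1 := (1 + d) / 2 with hp1
  set p2 := (1 - d) / 2 with hp2
  set q1 := (1 + n) / 2 with hq1
  set q2 := (1 - n) / 2 with hq2
  have hp1' : 0 ≤ p1 := by rw [hp1]; linarith
  have hp2' : 0 ≤ p2 := by rw [hp2]; linarith
  have hq1' : 0 ≤ q1 := by rw [hq1]; linarith
  have hq2' : 0 ≤ q2 := by rw [hq2]; linarith
  have hq1'' : q1 ≤ 1 := by rw [hq1]; linarith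
  set x1 := p1 * q1 with hx1
  set x2 := p2 * q2 with hx2
  set y1 := p1 * q2 with hy1
  set y2 := p2 * q1 with hy2
  have e0 : ent2 (p1 * (q1 * wp + q2 * wm)) (p2 * (q2 * wp + q1 * wm))
      = ent2 (wp * x1 + wm * y1) (wp * x2 + wm * y2) := by
    rw [hx1, hx2, hy1, hy2]; ring_nf
  have e1 : ent2 (p1 * (q1 * (1 - wp) + q2 * (1 - wm))) (p2 * (q2 * (1 - wp) + q1 * (1 - wm)))
      = ent2 ((1 - wp) * x1 + (1 - wm) * y1) ((1 - wp) * x2 + (1 - wm) * y2) := by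
    rw [hx1, hx2, hy1, hy2]; ring_nf
  have s0 : wp * ent2 x1 x2 + wm * ent2 y1 y2 ≤
      ent2 (wp * x1 + wm * y1) (wp * x2 + wm * y2) := by
    have := ent2_superadd (x1 := wp * x1) (x2 := wp * x2) (y1 := wm * y1) (y2 := wm * y2)
      (by positivity) (by positivity) (by positivity) (by positivity)
    rwa [ent2_smul, ent2_smul] at this
  have s1 : (1 - wp) * ent2 x1 x2 + (1 - wm) * ent2 y1 y2 ≤
      ent2 ((1 - wp) * x1 + (1 - wm) * y1) ((1 - wp) * x2 + (1 - wm) * y2) := by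
    have := ent2_superadd (x1 := (1 - wp) * x1) (x2 := (1 - wp) * x2)
      (y1 := (1 - wm) * y1) (y2 := (1 - wm) * y2)
      (by have : 0 ≤ 1 - wp := by linarith
          positivity)
      (by have : 0 ≤ 1 - wp := by linarith
          positivity)
      (by have : 0 ≤ 1 - wm := by linarith
          positivity)
      (by have : 0 ≤ 1 - wm := by linarith
          positivity)
    rwa [ent2_smul, ent2_smul] at this
  have hrow : ∀ p u v : ℝ, Real.negMulLog (p * u) + Real.negMulLog (p * v)
      = (u + v) * Real.negMulLog p + p * (Real.negMulLog u + Real.negMulLog v) := by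
    intro p u v
    rw [Real.negMulLog_mul, Real.negMulLog_mul]; ring
  have ident : Real.negMulLog p1 + Real.negMulLog p2 - ent2 x1 x2 - ent2 y1 y2
      = Real.negMulLog (x1 + x2) + Real.negMulLog (y1 + y2)
        - (Real.negMulLog q1 + Real.negMulLog q2) := by
    have hq12 : q1 + q2 = 1 := by rw [hq1, hq2]; ring
    have hp12 : p1 + p2 = 1 := by rw [hp1, hp2]; ring
    clear_value p1 p2 q1 q2 x1 x2 y1 y2
    have r1 := hrow p1 q1 q2
    have r2 := hrow p2 q2 q1
    simp only [ent2, hx1, hx2, hy1, hy2]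
    linear_combination (-1 : ℝ) * r1 - r2
      - (Real.negMulLog p1 + Real.negMulLog p2) * hq12
      - (Real.negMulLog q1 + Real.negMulLog q2) * hp12
  have hP : x1 + x2 + (y1 + y2) = 1 := by
    rw [hx1, hx2, hy1, hy2, hp1, hp2, hq1, hq2]; ring
  have step3 : Real.negMulLog (x1 + x2) + Real.negMulLog (y1 + y2) ≤ Real.log 2 := by
    have h : y1 + y2 = 1 - (x1 + x2) := by linarith
    rw [h, ← Real.binEntropy_eq_negMulLog_add_negMulLog_one_sub]
    exact Real.binEntropy_le_log_two
  have step4 : Real.log 2 - n ^ 2 * Real.log 2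
      ≤ Real.negMulLog q1 + Real.negMulLog q2 := by
    have hq2eq : q2 = 1 - q1 := by rw [hq1, hq2]; ring
    have := key_ineq q1 hq1' hq1''
    rw [hq2eq, ← Real.binEntropy_eq_negMulLog_add_negMulLog_one_sub]
    calc Real.log 2 - n ^ 2 * Real.log 2 = 4 * Real.log 2 * (q1 * (1 - q1)) := by
          rw [hq1]; ring
    _ ≤ _ := this
  rw [e0, e1]
  have hsum : ent2 x1 x2 + ent2 y1 y2 ≤
      ent2 (wp * x1 + wm * y1) (wp * x2 + wm * y2)
        + ent2 ((1 - wp) * x1 + (1 - wm) * y1) ((1 - wp) * x2 + (1 - wm) * y2) := by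
    nlinarith [s0, s1]
  linarith [ident, step3, step4, hsum]

lemma cond_term (u v : ℝ) (hu : 0 ≤ u) (hv : 0 ≤ v) :
    ((u + v) * -(u / (u + v) * Real.logb 2 (u / (u + v))
      + v / (u + v) * Real.logb 2 (v / (u + v)))) * Real.log 2 = ent2 u v := by
  rcases (add_nonneg hu hv).eq_or_lt with hN | hN
  · have h1 : u = 0 := by linarith
    have h2 : v = 0 := by linarith
    simp [h1, h2, ent2]
  rcases hu.eq_or_lt with hu' | hu'
  · subst hu'
    have hv' : 0 < v := by linarith
    simp [ent2, div_self hv'.ne']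
  rcases hv.eq_or_lt with hv' | hv'
  · subst hv'
    simp [ent2, div_self hu'.ne']
  · simp only [ent2, Real.negMulLog, Real.logb]
    rw [Real.log_div hu'.ne' hN.ne', Real.log_div hv'.ne' hN.ne']
    field_simp
    ring

lemma sqrt2_inv_sq : ((Real.sqrt 2 : ℂ))⁻¹ * ((Real.sqrt 2 : ℂ))⁻¹ = (2 : ℂ)⁻¹ := by
  rw [← mul_inv, ← Complex.ofReal_mul, Real.mul_self_sqrt (by norm_num : (0:ℝ) ≤ 2)]
  norm_num

lemma outProb_xbasis0 (M : Matrix (Fin 2) (Fin 2) ℂ) :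
    outProb M (xbasis 0) = ((M 0 0 + M 0 1 + M 1 0 + M 1 1) * (2:ℂ)⁻¹).re := by
  simp only [outProb, xbasis, dotProduct, Matrix.mulVec, Fin.sum_univ_two]
  simp only [Matrix.cons_val_zero, Matrix.cons_val_one, Matrix.head_cons, Pi.star_apply,
    RCLike.star_def, map_inv₀, Complex.conj_ofReal]
  congr 1
  rw [← sqrt2_inv_sq]
  ring

lemma outProb_xbasis1 (M : Matrix (Fin 2) (Fin 2) ℂ) :
    outProb M (xbasis 1) = ((M 0 0 - M 0 1 - M 1 0 + M 1 1) * (2:ℂ)⁻¹).re := by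
  simp only [outProb, xbasis, dotProduct, Matrix.mulVec, Fin.sum_univ_two]
  simp only [Matrix.cons_val_zero, Matrix.cons_val_one, Matrix.head_cons, Pi.star_apply,
    RCLike.star_def, map_inv₀, Complex.conj_ofReal, map_neg, star_neg]
  congr 1
  rw [← sqrt2_inv_sq]
  ring

lemma neg_entropy_term (x y : ℝ) :
    (-(x * Real.logb 2 x + y * Real.logb 2 y)) * Real.log 2
      = Real.negMulLog x + Real.negMulLog y := by
  have hlog2 : Real.log 2 ≠ 0 := ne_of_gt (Real.log_pos (by norm_num))
  simp only [Real.negMulLog, Real.logb]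
  field_simp
  ring

end QIAux

set_option maxHeartbeats 2000000 in
/-- For the σ_x eigenbasis with priors `(1±δ)/2` and the two-outcome POVM
`M_± = ½((1 ± R₀)I ± R⃗·σ⃗)` with `|R₀| + R ≤ 1`, `R = |R⃗| > 0`, one has
`I_x ≤ R_x²/R²`. -/
theorem pauli_x_info_bound (δ R0 Rx Ry Rz R : ℝ)
    (hδ : -1 ≤ δ ∧ δ ≤ 1)
    (hR : R = Real.sqrt (Rx ^ 2 + Ry ^ 2 + Rz ^ 2)) (hRpos : 0 < R)
    (hnorm : |R0| + R ≤ 1)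
    (E : Fin 2 → Matrix (Fin 2) (Fin 2) ℂ)
    (hE0 : E 0 = ((1 : ℝ) / 2) •
      ((1 + R0) • (1 : Matrix (Fin 2) (Fin 2) ℂ)
        + (Rx • pauliX + Ry • pauliY + Rz • pauliZ)))
    (hE1 : E 1 = ((1 : ℝ) / 2) •
      ((1 - R0) • (1 : Matrix (Fin 2) (Fin 2) ℂ)
        - (Rx • pauliX + Ry • pauliY + Rz • pauliZ))) :
    mutInfo xbasis ![(1 + δ) / 2, (1 - δ) / 2] E ≤ Rx ^ 2 / R ^ 2 := by
  obtain ⟨hd1, hd2⟩ := hδ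
  have hlog2 : (0:ℝ) < Real.log 2 := Real.log_pos (by norm_num)
  have hR2 : R ^ 2 = Rx ^ 2 + Ry ^ 2 + Rz ^ 2 := by
    rw [hR]; exact Real.sq_sqrt (by positivity)
  have hRx2 : Rx ^ 2 ≤ R ^ 2 := by nlinarith [sq_nonneg Ry, sq_nonneg Rz]
  have hRxR : |Rx| ≤ R := by
    calc |Rx| = Real.sqrt (Rx ^ 2) := (Real.sqrt_sq_eq_abs Rx).symm
    _ ≤ Real.sqrt (R ^ 2) := Real.sqrt_le_sqrt hRx2
    _ = R := Real.sqrt_sq hRpos.le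
  obtain ⟨hRxa1, hRxa2⟩ := abs_le.mp hRxR
  obtain ⟨hR01, hR02⟩ := abs_le.mp (by linarith : |R0| ≤ 1 - R)
  have o00 : outProb (E 0) (xbasis 0) = (1 + R0 + Rx) / 2 := by
    rw [QIAux.outProb_xbasis0, hE0]
    simp only [Matrix.smul_apply, Matrix.add_apply, Matrix.one_apply, pauliX, pauliY, pauliZ,
      Matrix.cons_val', Matrix.cons_val_zero, Matrix.cons_val_one, Matrix.head_cons,
      Matrix.empty_val', Matrix.cons_val_fin_one, Matrix.head_fin_const, Matrix.of_apply]
    norm_num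
    simp [Complex.add_re, Complex.mul_re, Complex.ofReal_re, Complex.ofReal_im, Complex.I_re,
      Complex.I_im, smul_eq_mul]
    ring
  have o01 : outProb (E 0) (xbasis 1) = (1 + R0 - Rx) / 2 := by
    rw [QIAux.outProb_xbasis1, hE0]
    simp only [Matrix.smul_apply, Matrix.add_apply, Matrix.one_apply, pauliX, pauliY, pauliZ,
      Matrix.cons_val', Matrix.cons_val_zero, Matrix.cons_val_one, Matrix.head_cons,
      Matrix.empty_val', Matrix.cons_val_fin_one, Matrix.head_fin_const, Matrix.of_apply]
    norm_num
    simp [Complex.add_re, Complex.mul_re, Complex.ofReal_re, Complex.ofReal_im, Complex.I_re,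
      Complex.I_im, smul_eq_mul]
    ring
  have o10 : outProb (E 1) (xbasis 0) = (1 - R0 - Rx) / 2 := by
    rw [QIAux.outProb_xbasis0, hE1]
    simp only [Matrix.smul_apply, Matrix.sub_apply, Matrix.add_apply, Matrix.one_apply,
      pauliX, pauliY, pauliZ,
      Matrix.cons_val', Matrix.cons_val_zero, Matrix.cons_val_one, Matrix.head_cons,
      Matrix.empty_val', Matrix.cons_val_fin_one, Matrix.head_fin_const, Matrix.of_apply]
    norm_num
    simp [Complex.add_re, Complex.sub_re, Complex.mul_re, Complex.ofReal_re, Complex.ofReal_im,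
      Complex.I_re, Complex.I_im, smul_eq_mul]
    ring
  have o11 : outProb (E 1) (xbasis 1) = (1 - R0 + Rx) / 2 := by
    rw [QIAux.outProb_xbasis1, hE1]
    simp only [Matrix.smul_apply, Matrix.sub_apply, Matrix.add_apply, Matrix.one_apply,
      pauliX, pauliY, pauliZ,
      Matrix.cons_val', Matrix.cons_val_zero, Matrix.cons_val_one, Matrix.head_cons,
      Matrix.empty_val', Matrix.cons_val_fin_one, Matrix.head_fin_const, Matrix.of_apply]
    norm_num
    simp [Complex.add_re, Complex.sub_re, Complex.mul_re, Complex.ofReal_re, Complex.ofReal_im,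
      Complex.I_re, Complex.I_im, smul_eq_mul]
    ring
  set n := Rx / R with hn
  set wp := (1 + R0 + R) / 2 with hwp
  set wm := (1 + R0 - R) / 2 with hwm
  have hwp0 : 0 ≤ wp := by rw [hwp]; linarith
  have hwp1 : wp ≤ 1 := by rw [hwp]; linarith
  have hwm0 : 0 ≤ wm := by rw [hwm]; linarith
  have hwm1 : wm ≤ 1 := by rw [hwm]; linarith
  have hn1 : -1 ≤ n := by rw [hn, le_div_iff₀ hRpos]; linarith
  have hn2 : n ≤ 1 := by rw [hn, div_le_one hRpos]; linarith
  have ea : (1 + R0 + Rx) / 2 = ((1 + n) / 2) * wp + ((1 - n) / 2) * wm := by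
    rw [hn, hwp, hwm]; field_simp; ring
  have eb : (1 + R0 - Rx) / 2 = ((1 - n) / 2) * wp + ((1 + n) / 2) * wm := by
    rw [hn, hwp, hwm]; field_simp; ring
  have ec : (1 - R0 - Rx) / 2 = ((1 + n) / 2) * (1 - wp) + ((1 - n) / 2) * (1 - wm) := by
    rw [hn, hwp, hwm]; field_simp; ring
  have ed : (1 - R0 + Rx) / 2 = ((1 - n) / 2) * (1 - wp) + ((1 + n) / 2) * (1 - wm) := by
    rw [hn, hwp, hwm]; field_simp; ring
  have hrhs : Rx ^ 2 / R ^ 2 = n ^ 2 := by rw [hn, div_pow]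
  have hu0 : 0 ≤ (1 + δ) / 2 * ((1 + R0 + Rx) / 2) :=
    mul_nonneg (by linarith) (by linarith)
  have hv0 : 0 ≤ (1 - δ) / 2 * ((1 + R0 - Rx) / 2) :=
    mul_nonneg (by linarith) (by linarith)
  have hu1 : 0 ≤ (1 + δ) / 2 * ((1 - R0 - Rx) / 2) :=
    mul_nonneg (by linarith) (by linarith)
  have hv1 : 0 ≤ (1 - δ) / 2 * ((1 - R0 + Rx) / 2) :=
    mul_nonneg (by linarith) (by linarith)
  have master' := QIAux.master δ n wp wm hd1 hd2 hn1 hn2 hwp0 hwp1 hwm0 hwm1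
  rw [← ea, ← eb, ← ec, ← ed] at master'
  have t1 := QIAux.neg_entropy_term ((1 + δ) / 2) ((1 - δ) / 2)
  have t2 := QIAux.cond_term _ _ hu0 hv0
  have t3 := QIAux.cond_term _ _ hu1 hv1
  rw [hrhs, ← mul_le_mul_iff_of_pos_right hlog2]
  simp only [mutInfo, shannonEntropy, Fin.sum_univ_two, Matrix.cons_val_zero,
    Matrix.cons_val_one, Matrix.head_cons, o00, o01, o10, o11]
  calc (-((1 + δ) / 2 * Real.logb 2 ((1 + δ) / 2) + (1 - δ) / 2 * Real.logb 2 ((1 - δ) / 2))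
        - (((1 + δ) / 2 * ((1 + R0 + Rx) / 2) + (1 - δ) / 2 * ((1 + R0 - Rx) / 2)) *
            -((1 + δ) / 2 * ((1 + R0 + Rx) / 2) /
                ((1 + δ) / 2 * ((1 + R0 + Rx) / 2) + (1 - δ) / 2 * ((1 + R0 - Rx) / 2)) *
                Real.logb 2 ((1 + δ) / 2 * ((1 + R0 + Rx) / 2) /
                  ((1 + δ) / 2 * ((1 + R0 + Rx) / 2) + (1 - δ) / 2 * ((1 + R0 - Rx) / 2)))
              + (1 - δ) / 2 * ((1 + R0 - Rx) / 2) /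
                ((1 + δ) / 2 * ((1 + R0 + Rx) / 2) + (1 - δ) / 2 * ((1 + R0 - Rx) / 2)) *
                Real.logb 2 ((1 - δ) / 2 * ((1 + R0 - Rx) / 2) /
                  ((1 + δ) / 2 * ((1 + R0 + Rx) / 2) + (1 - δ) / 2 * ((1 + R0 - Rx) / 2))))
          + ((1 + δ) / 2 * ((1 - R0 - Rx) / 2) + (1 - δ) / 2 * ((1 - R0 + Rx) / 2)) *
            -((1 + δ) / 2 * ((1 - R0 - Rx) / 2) /
                ((1 + δ) / 2 * ((1 - R0 - Rx) / 2) + (1 - δ) / 2 * ((1 - R0 + Rx) / 2)) *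
                Real.logb 2 ((1 + δ) / 2 * ((1 - R0 - Rx) / 2) /
                  ((1 + δ) / 2 * ((1 - R0 - Rx) / 2) + (1 - δ) / 2 * ((1 - R0 + Rx) / 2)))
              + (1 - δ) / 2 * ((1 - R0 + Rx) / 2) /
                ((1 + δ) / 2 * ((1 - R0 - Rx) / 2) + (1 - δ) / 2 * ((1 - R0 + Rx) / 2)) *
                Real.logb 2 ((1 - δ) / 2 * ((1 - R0 + Rx) / 2) /
                  ((1 + δ) / 2 * ((1 - R0 - Rx) / 2) + (1 - δ) / 2 * ((1 - R0 + Rx) / 2))))))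
        * Real.log 2
      = Real.negMulLog ((1 + δ) / 2) + Real.negMulLog ((1 - δ) / 2)
        - QIAux.ent2 ((1 + δ) / 2 * ((1 + R0 + Rx) / 2)) ((1 - δ) / 2 * ((1 + R0 - Rx) / 2))
        - QIAux.ent2 ((1 + δ) / 2 * ((1 - R0 - Rx) / 2)) ((1 - δ) / 2 * ((1 - R0 + Rx) / 2)) := by
        linear_combination t1 - t2 - t3
    _ ≤ n ^ 2 * Real.log 2 := master'
end
end
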